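/- Let C : Fin d → Fin d → Fin d → ℝ be antisymmetric in its two upper indices. Let Ã : (Fin d → ℝ) → (Fin d → ℝ) be differentiable at a point A, with Jacobian matrix J given by J^ξ_μ := ∂Ã_ξ/∂A_μ (row index ξ, column index μ), and assume J is invertible. Let B be the matrix B^μ_ν := Σ_σ C^{σμ}_ν·(Ã(A))_σ, assume ‖B‖ < 2π and that γ_u(−B) is invertible. Define γ := γ_u(B)·(J⁻¹)ᵀ and ρ := Jᵀ·(γ_u(−B))⁻¹. Then (det(γ·ρ))⁻¹ = exp(Σ_{μ,σ} C^{μσ}_μ·(Ã(A))_σ). -/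

import Mathlib

open scoped Matrix

attribute [local instance] Matrix.linftyOpNormedRing Matrix.linftyOpNormedAlgebra

/-- The universal matrix `γ_u(X) := ∑_{k=0}^∞ (B'_k/k!)·X^k`, with `B'_k` the Bernoulli
numbers with convention `B'_1 = +1/2`. -/
noncomputable def gammaU {d : ℕ} (X : Matrix (Fin d) (Fin d) ℝ) : Matrix (Fin d) (Fin d) ℝ :=
  ∑' k : ℕ, ((bernoulli' k : ℝ) / (Nat.factorial k : ℝ)) • X ^ k


open Finset in
lemma bern_coeff_sum (n : ℕ) :
    ∑ k ∈ Finset.range (n + 1),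
      ((Nat.factorial k : ℚ))⁻¹ * (bernoulli (n - k) / (Nat.factorial (n - k) : ℚ))
      = bernoulli' n / (Nat.factorial n : ℚ) := by
  have h1 : ∀ k ∈ Finset.range (n + 1),
      ((Nat.factorial k : ℚ))⁻¹ * (bernoulli (n - k) / (Nat.factorial (n - k) : ℚ))
        = (n.choose (n - k) : ℚ) * bernoulli (n - k) / (Nat.factorial n : ℚ) := by
    intro k hk
    have hkn : k ≤ n := Nat.lt_succ_iff.mp (Finset.mem_range.mp hk)
    have h2 : n - (n - k) = k := Nat.sub_sub_self hkn
    rw [Nat.cast_choose ℚ (Nat.sub_le n k), h2]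
    have h3 : (Nat.factorial k : ℚ) ≠ 0 := Nat.cast_ne_zero.mpr k.factorial_ne_zero
    have h4 : (Nat.factorial (n - k) : ℚ) ≠ 0 := Nat.cast_ne_zero.mpr (n - k).factorial_ne_zero
    have h5 : (Nat.factorial n : ℚ) ≠ 0 := Nat.cast_ne_zero.mpr n.factorial_ne_zero
    field_simp
  rw [Finset.sum_congr rfl h1]
  have h6 := Finset.sum_range_reflect
    (fun j => (n.choose j : ℚ) * bernoulli j / (Nat.factorial n : ℚ)) (n + 1)
  simp only [Nat.add_sub_cancel] at h6
  rw [h6, ← Finset.sum_div, Finset.sum_range_succ, sum_bernoulli, Nat.choose_self, Nat.cast_one,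
    one_mul]
  rcases eq_or_ne n 1 with rfl | hn
  · norm_num [bernoulli_one, bernoulli'_one, Nat.factorial]
  · rw [if_neg hn, zero_add, bernoulli_eq_bernoulli'_of_ne_one hn]

lemma bern_abs_bound (k : ℕ) :
    |(bernoulli k : ℝ) / (Nat.factorial k : ℝ)| ≤ 4 / (2 * Real.pi) ^ k := by
  have hpi : (0:ℝ) < Real.pi := Real.pi_pos
  rcases Nat.even_or_odd k with he | ho
  · rcases Nat.eq_zero_or_pos k with rfl | hk
    · norm_num
    · obtain ⟨m, rfl⟩ := (even_iff_exists_two_mul (a := k)).mp he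
      have hm : m ≠ 0 := by rintro rfl; omega
      have hzeta := hasSum_zeta_nat hm
      set S : ℝ := ∑' n : ℕ, 1 / (n : ℝ) ^ (2 * m) with hSdef
      have hS : S = (-1 : ℝ) ^ (m + 1) * 2 ^ (2 * m - 1) * Real.pi ^ (2 * m)
          * (bernoulli (2 * m) : ℝ) / ((2 * m).factorial : ℝ) := hzeta.tsum_eq
      have hS0 : 0 ≤ S := tsum_nonneg fun n => by positivity
      have hS2 : S ≤ 2 := by
        have hle : ∀ n : ℕ, 1 / (n : ℝ) ^ (2 * m) ≤ 1 / (n : ℝ) ^ 2 := by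
          intro n
          rcases Nat.eq_zero_or_pos n with rfl | hn
          · rw [Nat.cast_zero, zero_pow (by omega : 2 * m ≠ 0),
              zero_pow (by norm_num : 2 ≠ 0), div_zero]
          · have h1n : (1:ℝ) ≤ n := by exact_mod_cast hn
            have h2 : (n:ℝ) ^ 2 ≤ (n:ℝ) ^ (2 * m) := by
              apply pow_le_pow_right₀ h1n; omega
            exact one_div_le_one_div_of_le (by positivity) h2
        have := hasSum_le hle hzeta hasSum_zeta_two
        rw [← hS] at this
        nlinarith [Real.pi_lt_d2, Real.pi_pos]
      have habs : S = 2 ^ (2 * m - 1) * Real.pi ^ (2 * m)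
          * |(bernoulli (2 * m) : ℝ) / ((2 * m).factorial : ℝ)| := by
        calc S = |S| := (abs_of_nonneg hS0).symm
          _ = |(-1:ℝ) ^ (m+1)| * |(2:ℝ) ^ (2*m-1)| * |Real.pi ^ (2*m)|
                * |(bernoulli (2*m) : ℝ) / ((2 * m).factorial : ℝ)| := by
              rw [hS, mul_div_assoc, abs_mul, abs_mul, abs_mul]
          _ = _ := by
              rw [abs_pow, abs_pow, abs_pow, abs_neg, abs_one, one_pow, one_mul,
                abs_two, abs_of_nonneg hpi.le]
      have hX : (0:ℝ) < 2 ^ (2 * m - 1) * Real.pi ^ (2 * m) := by positivity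
      have hfinal : |(bernoulli (2*m) : ℝ) / ((2 * m).factorial : ℝ)|
          = S / (2 ^ (2 * m - 1) * Real.pi ^ (2 * m)) := by
        rw [habs]; field_simp
      show |(bernoulli (2*m) : ℝ) / ((2 * m).factorial : ℝ)| ≤ 4 / (2 * Real.pi) ^ (2 * m)
      rw [hfinal]
      have h2pi : (2 * Real.pi) ^ (2 * m) = 2 * (2 ^ (2 * m - 1) * Real.pi ^ (2 * m)) := by
        rw [mul_pow]
        have h22 : (2:ℝ) ^ (2 * m) = 2 * 2 ^ (2 * m - 1) := by
          rw [← pow_succ']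
          congr 1; omega
        rw [h22]; ring
      rw [h2pi, div_le_div_iff₀ hX (by positivity)]
      nlinarith
  · rcases eq_or_ne k 1 with rfl | hk1
    · rw [bernoulli_one]
      have h1 : |((-1/2 : ℚ) : ℝ) / (Nat.factorial 1 : ℝ)| = 1/2 := by norm_num
      rw [h1, pow_one, le_div_iff₀ (by positivity)]
      nlinarith [Real.pi_lt_d2]
    · have h3 : 1 < k := by
        obtain ⟨j, hj⟩ := ho; omega
      rw [bernoulli_eq_bernoulli'_of_ne_one hk1, bernoulli'_eq_zero_of_odd ho h3]
      simp only [Rat.cast_zero, zero_div, abs_zero]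
      positivity

lemma bern_summable {d : ℕ} (M : Matrix (Fin d) (Fin d) ℝ) (h : ‖M‖ < 2 * Real.pi) :
    Summable fun k : ℕ => ‖((bernoulli k : ℝ) / (Nat.factorial k : ℝ)) • M ^ k‖ := by
  have hpi : (0:ℝ) < 2 * Real.pi := by positivity
  rw [← summable_nat_add_iff 1]
  have hr0 : (0:ℝ) ≤ ‖M‖ / (2 * Real.pi) := by positivity
  have hr1 : ‖M‖ / (2 * Real.pi) < 1 := (div_lt_one hpi).mpr h
  have hgeo : Summable fun k : ℕ => 4 * (‖M‖ / (2 * Real.pi)) ^ (k + 1) :=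
    ((summable_geometric_of_lt_one hr0 hr1).mul_left 4).comp_injective (add_left_injective 1)
  refine Summable.of_nonneg_of_le (fun k => norm_nonneg _) (fun k => ?_) hgeo
  rw [norm_smul, Real.norm_eq_abs]
  calc |(bernoulli (k+1) : ℝ) / (Nat.factorial (k+1) : ℝ)| * ‖M ^ (k+1)‖
      ≤ (4 / (2 * Real.pi) ^ (k+1)) * ‖M‖ ^ (k+1) := by
        apply mul_le_mul (bern_abs_bound (k+1)) (norm_pow_le' M k.succ_pos)
          (norm_nonneg _) (by positivity)
    _ = 4 * (‖M‖ / (2 * Real.pi)) ^ (k + 1) := by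
        rw [div_pow]; ring

open NormedSpace in
lemma exp_mul_gammaU_neg {d : ℕ} (B : Matrix (Fin d) (Fin d) ℝ) (h : ‖B‖ < 2 * Real.pi) :
    exp B * gammaU (-B) = gammaU B := by
  haveI : CompleteSpace (Matrix (Fin d) (Fin d) ℝ) := FiniteDimensional.complete ℝ _
  have hexp : exp B = ∑' n : ℕ, ((Nat.factorial n : ℝ))⁻¹ • B ^ n := by
    rw [exp_eq_tsum ℝ]
  have hg : gammaU (-B) = ∑' k : ℕ, ((bernoulli k : ℝ) / (Nat.factorial k : ℝ)) • B ^ k := by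
    unfold gammaU
    refine tsum_congr fun k => ?_
    have h1 : (-B) ^ k = ((-1 : ℝ) ^ k) • B ^ k := by
      rw [← neg_one_smul ℝ B, smul_pow]
    rw [h1, smul_smul]
    congr 1
    have hb : (bernoulli k : ℝ) = (-1) ^ k * (bernoulli' k : ℝ) := by
      have := bernoulli k
      rw [show bernoulli k = (-1) ^ k * bernoulli' k from rfl]
      push_cast
      ring
    rw [hb]; ring
  have hsum1 : Summable fun n : ℕ => ‖((Nat.factorial n : ℝ))⁻¹ • B ^ n‖ := by
    simpa using norm_expSeries_summable' (𝕂 := ℝ) B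
  rw [hexp, hg]
  refine (tsum_mul_tsum_eq_tsum_sum_range_of_summable_norm hsum1 (bern_summable B h)).trans ?_
  unfold gammaU
  refine tsum_congr fun n => ?_
  have key : ∀ k ∈ Finset.range (n + 1),
      (((Nat.factorial k : ℝ))⁻¹ • B ^ k) * (((bernoulli (n - k) : ℝ) / (Nat.factorial (n - k) : ℝ)) • B ^ (n - k))
        = (((Nat.factorial k : ℝ))⁻¹ * ((bernoulli (n - k) : ℝ) / (Nat.factorial (n - k) : ℝ))) • B ^ n := by
    intro k hk
    have hkn : k ≤ n := Nat.lt_succ_iff.mp (Finset.mem_range.mp hk)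
    rw [smul_mul_smul_comm, ← pow_add, Nat.add_sub_cancel' hkn]
  rw [Finset.sum_congr rfl key, ← Finset.sum_smul]
  congr 1
  have := bern_coeff_sum n
  have hcast : ((∑ k ∈ Finset.range (n + 1),
      ((Nat.factorial k : ℚ))⁻¹ * (bernoulli (n - k) / (Nat.factorial (n - k) : ℚ)) : ℚ) : ℝ)
      = ((bernoulli' n / (Nat.factorial n : ℚ) : ℚ) : ℝ) := by
    exact_mod_cast congrArg (fun q : ℚ => (q : ℝ)) this
  push_cast at hcast
  rw [← hcast]

lemma sum_det_updateRow {d : ℕ} (A M : Matrix (Fin d) (Fin d) ℝ) :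
    ∑ i, (M.updateRow i ((A * M) i)).det = A.trace * M.det := by
  have h : ∀ i, (A * M) i = ∑ k, A i k • M k := by
    intro i; funext j
    simp [Matrix.mul_apply, Finset.sum_apply]
  calc ∑ i, (M.updateRow i ((A * M) i)).det
      = ∑ i, A i i • M.det := by
        refine Finset.sum_congr rfl fun i _ => ?_
        rw [h i, Matrix.det_updateRow_sum]
    _ = A.trace * M.det := by
        simp only [smul_eq_mul, Matrix.trace, Finset.sum_mul]
        simp [Matrix.diag]

open NormedSpace in
lemma det_exp_eq {d : ℕ} (B : Matrix (Fin d) (Fin d) ℝ) :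
    (exp B).det = Real.exp B.trace := by
  classical
  haveI : CompleteSpace (Matrix (Fin d) (Fin d) ℝ) := FiniteDimensional.complete ℝ _
  have hbound : ∀ m : Fin d → (Fin d → ℝ),
      ‖(Matrix.detRowAlternating (R := ℝ) (n := Fin d)).toMultilinearMap m‖
        ≤ (Nat.factorial d : ℝ) * ∏ i, ‖m i‖ := by
    intro m
    rw [show (Matrix.detRowAlternating (R := ℝ) (n := Fin d)).toMultilinearMap m
        = Matrix.det (Matrix.of m) from rfl, Matrix.det_apply']
    refine (norm_sum_le _ _).trans ?_
    have hterm : ∀ σ : Equiv.Perm (Fin d),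
        ‖((Equiv.Perm.sign σ : ℤ) : ℝ) * ∏ i, Matrix.of m (σ i) i‖ ≤ ∏ i, ‖m i‖ := by
      intro σ
      rw [norm_mul]
      have h1 : ‖((Equiv.Perm.sign σ : ℤ) : ℝ)‖ = 1 := by
        rcases Int.units_eq_one_or (Equiv.Perm.sign σ) with h | h <;> simp [h]
      rw [h1, one_mul, Real.norm_eq_abs, Finset.abs_prod]
      calc ∏ i, |Matrix.of m (σ i) i| ≤ ∏ i, ‖m (σ i)‖ := by
            refine Finset.prod_le_prod (fun i _ => abs_nonneg _) (fun i _ => ?_)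
            exact norm_le_pi_norm (m (σ i)) i
        _ = ∏ i, ‖m i‖ := Equiv.prod_comp σ (fun i => ‖m i‖)
    refine (Finset.sum_le_sum (fun σ _ => hterm σ)).trans ?_
    rw [Finset.sum_const, Finset.card_univ, Fintype.card_perm, Fintype.card_fin, nsmul_eq_mul]
  set F : ContinuousMultilinearMap ℝ (fun _ : Fin d => (Fin d → ℝ)) ℝ :=
    MultilinearMap.mkContinuous (Matrix.detRowAlternating (R := ℝ) (n := Fin d)).toMultilinearMap
      (Nat.factorial d : ℝ) hbound with hF
  let rowsLin : Matrix (Fin d) (Fin d) ℝ →ₗ[ℝ] (Fin d → Fin d → ℝ) :=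
    { toFun := fun M => M
      map_add' := fun _ _ => rfl
      map_smul' := fun _ _ => rfl }
  let L : Matrix (Fin d) (Fin d) ℝ →L[ℝ] (Fin d → Fin d → ℝ) :=
    LinearMap.toContinuousLinearMap rowsLin
  have hdet : ∀ M : Matrix (Fin d) (Fin d) ℝ,
      HasFDerivAt (Matrix.det : Matrix (Fin d) (Fin d) ℝ → ℝ)
        ((F.linearDeriv (L M)).comp L) M := by
    intro M
    exact (F.hasFDerivAt (L M)).comp M L.hasFDerivAt
  have hderiv : ∀ t : ℝ, HasDerivAt (fun t : ℝ => (exp (t • B)).det)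
      (B.trace * (exp (t • B)).det) t := by
    intro t
    have h2 : HasDerivAt (fun u : ℝ => exp (u • B)) (B * exp (t • B)) t :=
      hasDerivAt_exp_smul_const' B t
    have h3 := (hdet (exp (t • B))).comp_hasDerivAt t h2
    refine h3.congr_deriv (Eq.symm ?_)
    show B.trace * (exp (t • B)).det = (F.linearDeriv (L (exp (t • B)))) (L (B * exp (t • B)))
    rw [ContinuousMultilinearMap.linearDeriv_apply,
      ← sum_det_updateRow B (exp (t • B))]
    rfl
  set c := B.trace with hc
  have hg : ∀ t : ℝ, HasDerivAt (fun t : ℝ => Real.exp (-c * t) * (exp (t • B)).det) 0 t := by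
    intro t
    have h1 : HasDerivAt (fun t : ℝ => -c * t) (-c) t := by
      simpa using (hasDerivAt_id t).const_mul (-c)
    have h2 := h1.exp
    have h4 := h2.mul (hderiv t)
    refine h4.congr_deriv (Eq.symm ?_)
    ring
  have hconst := is_const_of_deriv_eq_zero (f := fun t : ℝ => Real.exp (-c * t) * (exp (t • B)).det)
    (fun t => (hg t).differentiableAt) (fun t => (hg t).deriv) 1 0
  simp only [mul_zero, zero_smul, exp_zero, Matrix.det_one, mul_one, Real.exp_zero, one_mul] at hconst
  rw [Real.exp_neg] at hconst
  rw [inv_mul_eq_one₀ (Real.exp_ne_zero c)] at hconst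
  rw [one_smul] at hconst
  exact hconst.symm

/-- Proposition 1 (universal-equivalent realization): under a field redefinition
`A ↦ Ã(A)` with Jacobian `J`, the integrating factor `(det(γρ))⁻¹` for
`γ = γ_u(B)·(J⁻¹)ᵀ`, `ρ = Jᵀ·(γ_u(−B))⁻¹`, `B^μ_ν = Σ_σ C^{σμ}_ν Ã_σ(A)`,
equals `exp(C^{μσ}_μ Ã_σ(A))`. -/
theorem integrating_factor_universal_equivalent {d : ℕ} (C : Fin d → Fin d → Fin d → ℝ)
    (hC : ∀ μ ν lam, C μ ν lam = - C ν μ lam)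
    (Atil : (Fin d → ℝ) → (Fin d → ℝ)) (A : Fin d → ℝ)
    (hdiff : DifferentiableAt ℝ Atil A)
    (J : Matrix (Fin d) (Fin d) ℝ)
    (hJ : J = Matrix.of fun ξ μ => fderiv ℝ Atil A (Pi.single μ 1) ξ)
    (hJinv : IsUnit J)
    (B : Matrix (Fin d) (Fin d) ℝ)
    (hB : B = Matrix.of fun μ ν => ∑ σ, C σ μ ν * Atil A σ)
    (hnorm : ‖B‖ < 2 * Real.pi)
    (hinv : IsUnit (gammaU (-B)))
    (γ ρ : Matrix (Fin d) (Fin d) ℝ)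
    (hγ : γ = gammaU B * (J⁻¹)ᵀ)
    (hρ : ρ = Jᵀ * (gammaU (-B))⁻¹) :
    ((γ * ρ).det)⁻¹ = Real.exp (∑ μ, ∑ σ, C μ σ μ * Atil A σ) := by
  have hJdet : IsUnit J.det := (Matrix.isUnit_iff_isUnit_det J).mp hJinv
  have h1 : (J⁻¹)ᵀ * Jᵀ = 1 := by
    rw [← Matrix.transpose_mul, Matrix.mul_nonsing_inv J hJdet, Matrix.transpose_one]
  have hγρ : γ * ρ = NormedSpace.exp B := by
    rw [hγ, hρ]
    calc gammaU B * (J⁻¹)ᵀ * (Jᵀ * (gammaU (-B))⁻¹)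
        = gammaU B * ((J⁻¹)ᵀ * Jᵀ) * (gammaU (-B))⁻¹ := by
          simp only [Matrix.mul_assoc]
      _ = gammaU B * (gammaU (-B))⁻¹ := by rw [h1, Matrix.mul_one]
      _ = NormedSpace.exp B * gammaU (-B) * (gammaU (-B))⁻¹ := by
          rw [exp_mul_gammaU_neg B hnorm]
      _ = NormedSpace.exp B := by
          rw [Matrix.mul_assoc,
            Matrix.mul_nonsing_inv _ ((Matrix.isUnit_iff_isUnit_det _).mp hinv), Matrix.mul_one]
  have htr : B.trace = -∑ μ, ∑ σ, C μ σ μ * Atil A σ := by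
    have hterm : ∀ μ σ : Fin d, C σ μ μ * Atil A σ = -(C μ σ μ * Atil A σ) := by
      intro μ σ; rw [hC σ μ μ]; ring
    simp only [hB, Matrix.trace, Matrix.diag_apply, Matrix.of_apply, hterm,
      Finset.sum_neg_distrib]
  rw [hγρ, det_exp_eq, htr, Real.exp_neg, inv_inv]
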